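/- Let n ≥ 1, m ≥ 0 and κ ≥ 0. Every symmetric polynomial f in n variables of degree at most m satisfies ∫_{(0,∞)ⁿ} |f(x)|² dμ^B(x) < ∞ if and only if a < −2(m + κ(n−1)) + 1. -/

import Mathlib

open MvPolynomial MeasureTheory Filter
open scoped BigOperators Classical

namespace MVB

noncomputable section

/-! ### Partitions and eigenvalues -/

def IsPartition (n : ℕ) (l : Fin n → ℕ) : Prop := ∀ i j : Fin n, i ≤ j → l j ≤ l i

def wt (n : ℕ) (l : Fin n → ℕ) : ℕ := ∑ i, l i

/-- `μ ⊂ λ`. -/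
def SubPart (n : ℕ) (m l : Fin n → ℕ) : Prop := (∀ i, m i ≤ l i) ∧ m ≠ l

/-- `d_ν = Σᵢ νᵢ(νᵢ − 1 + 2κ(n−i))` (1-indexed `i`). -/
def dEig (n : ℕ) (κ : ℝ) (l : Fin n → ℕ) : ℝ :=
  ∑ i : Fin n, (l i : ℝ) * ((l i : ℝ) - 1 + 2 * κ * ((n : ℝ) - 1 - ((i : ℕ) : ℝ)))

def eEig (n : ℕ) (κ a : ℝ) (l : Fin n → ℕ) : ℝ := dEig n κ l + a * (wt n l : ℝ)

/-- strict dominance order on partitions of equal weight. -/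
def DomLt (n : ℕ) (m l : Fin n → ℕ) : Prop :=
  wt n m = wt n l ∧
  (∀ k : Fin n, ∑ i ∈ Finset.univ.filter (fun i => i ≤ k), m i
      ≤ ∑ i ∈ Finset.univ.filter (fun i => i ≤ k), l i) ∧ m ≠ l

def boundedFuns (n N : ℕ) : Finset (Fin n → ℕ) :=
  (Finset.univ : Finset (Fin n → Fin (N+1))).image (fun f i => (f i : ℕ))

/-- the finset of partitions `μ ⊂ λ`. -/
def strictSubs (n : ℕ) (l : Fin n → ℕ) : Finset (Fin n → ℕ) :=
  (boundedFuns n (wt n l)).filter (fun m => IsPartition n m ∧ SubPart n m l)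

/-- the finset of partitions strictly dominated by `λ`. -/
def domLts (n : ℕ) (l : Fin n → ℕ) : Finset (Fin n → ℕ) :=
  (boundedFuns n (wt n l)).filter (fun m => IsPartition n m ∧ DomLt n m l)

/-- the finset of partitions `μ ⊆ λ`. -/
def subsetsOf (n : ℕ) (l : Fin n → ℕ) : Finset (Fin n → ℕ) :=
  (boundedFuns n (wt n l)).filter (fun m => IsPartition n m ∧ ∀ i, m i ≤ l i)

/-! ### Polynomials, differential operators, Jack and Bessel polynomials -/

def rc (𝕜 : Type*) [RCLike 𝕜] : ℝ → 𝕜 := algebraMap ℝ 𝕜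

/-- the monomial symmetric polynomial `m_λ`. -/
def mSymm (n : ℕ) (𝕜 : Type*) [RCLike 𝕜] (l : Fin n → ℕ) : MvPolynomial (Fin n) 𝕜 :=
  ∑ α ∈ (Finset.univ : Finset (Equiv.Perm (Fin n))).image
      (fun σ => l ∘ (σ : Fin n → Fin n)),
    monomial (Finsupp.equivFunOnFinite.symm α) (1 : 𝕜)

/-- evaluation of a polynomial at a real point. -/
def evalr (n : ℕ) (𝕜 : Type*) [RCLike 𝕜] (p : MvPolynomial (Fin n) 𝕜) (x : Fin n → ℝ) : 𝕜 :=
  eval (fun i => rc 𝕜 (x i)) p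

/-- partial derivative `∂/∂xᵢ`. -/
def pd (n : ℕ) (𝕜 : Type*) [RCLike 𝕜] (i : Fin n) (f : (Fin n → ℝ) → 𝕜) : (Fin n → ℝ) → 𝕜 :=
  fun x => fderiv ℝ f x (Pi.single i 1)

def Distinct (n : ℕ) : Set (Fin n → ℝ) := {x | ∀ i j : Fin n, i ≠ j → x i ≠ x j}

def DistinctNZ (n : ℕ) : Set (Fin n → ℝ) :=
  {x | (∀ i, x i ≠ 0) ∧ ∀ i j : Fin n, i ≠ j → x i ≠ x j}

/-- `D₂ = Σᵢ xᵢ²∂ᵢ² + 2κ Σ_{i≠j} (xᵢ²/(xᵢ−xⱼ)) ∂ᵢ`. -/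
def D2op (n : ℕ) (𝕜 : Type*) [RCLike 𝕜] (κ : ℝ) (f : (Fin n → ℝ) → 𝕜) : (Fin n → ℝ) → 𝕜 :=
  fun x => ∑ i, rc 𝕜 ((x i)^2) * pd n 𝕜 i (pd n 𝕜 i f) x
    + 2 * rc 𝕜 κ * ∑ i, ∑ j ∈ Finset.univ.erase i,
        rc 𝕜 ((x i)^2 / (x i - x j)) * pd n 𝕜 i f x

/-- `D^B = Σᵢ xᵢ²∂ᵢ² + Σᵢ (a xᵢ + 2) ∂ᵢ + 2κ Σ_{i≠j} (xᵢ²/(xᵢ−xⱼ)) ∂ᵢ`. -/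
def DBop (n : ℕ) (𝕜 : Type*) [RCLike 𝕜] (κ a : ℝ) (f : (Fin n → ℝ) → 𝕜) : (Fin n → ℝ) → 𝕜 :=
  fun x => D2op n 𝕜 κ f x + ∑ i, rc 𝕜 (a * x i + 2) * pd n 𝕜 i f x

/-- `P` is a family of (monic) Jack polynomials with parameter `κ`. -/
def IsJackFamily (n : ℕ) (𝕜 : Type*) [RCLike 𝕜] (κ : ℝ)
    (P : (Fin n → ℕ) → MvPolynomial (Fin n) 𝕜) : Prop :=
  ∀ l : Fin n → ℕ, IsPartition n l →
    (P l).IsSymmetric ∧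
    (∃ c : (Fin n → ℕ) → 𝕜,
      P l = mSymm n 𝕜 l + ∑ m ∈ domLts n l, c m • mSymm n 𝕜 m) ∧
    (∀ x ∈ Distinct n, D2op n 𝕜 κ (evalr n 𝕜 (P l)) x = rc 𝕜 (dEig n κ l) * evalr n 𝕜 (P l) x)

/-- `Y` is the multivariable Bessel polynomial attached to the partition `l`. -/
def IsBessel (n : ℕ) (𝕜 : Type*) [RCLike 𝕜] (κ a : ℝ)
    (P : (Fin n → ℕ) → MvPolynomial (Fin n) 𝕜)
    (l : Fin n → ℕ) (Y : MvPolynomial (Fin n) 𝕜) : Prop :=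
  Y.IsSymmetric ∧
  (∃ u : (Fin n → ℕ) → 𝕜, Y = P l + ∑ m ∈ strictSubs n l, u m • P m) ∧
  (∀ x ∈ Distinct n, DBop n 𝕜 κ a (evalr n 𝕜 Y) x = rc 𝕜 (eEig n κ a l) * evalr n 𝕜 Y x)

/-- `B` is the family of generalised binomial coefficients of the Jack family `P`. -/
def IsBinomFamily (n : ℕ) (𝕜 : Type*) [RCLike 𝕜]
    (P : (Fin n → ℕ) → MvPolynomial (Fin n) 𝕜)
    (B : (Fin n → ℕ) → (Fin n → ℕ) → 𝕜) : Prop :=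
  ∀ l : Fin n → ℕ, IsPartition n l → ∀ x : Fin n → ℝ,
    evalr n 𝕜 (P l) (fun i => x i + 1) / evalr n 𝕜 (P l) (fun _ => 1)
      = ∑ m ∈ subsetsOf n l, B l m * evalr n 𝕜 (P m) x / evalr n 𝕜 (P m) (fun _ => 1)

/-! ### Chains (standard tableaux of skew shape) -/

def IsChainLM (n : ℕ) (l m : Fin n → ℕ) (r : ℕ) (c : Fin (r+1) → Fin n → ℕ) : Prop :=
  c 0 = l ∧ c (Fin.last r) = m ∧
  ∀ k : Fin r, IsPartition n (c k.succ) ∧ SubPart n (c k.succ) (c k.castSucc) ∧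
    wt n (c k.castSucc) = wt n (c k.succ) + 1

def chainsLM (n : ℕ) (l m : Fin n → ℕ) (r : ℕ) : Finset (Fin (r+1) → Fin n → ℕ) :=
  ((Finset.univ : Finset (Fin (r+1) → Fin n → Fin (wt n l + 1))).image
    (fun c k i => (c k i : ℕ))).filter (IsChainLM n l m r)

/-- the coefficients in the Jack expansion of the Bessel polynomials. -/
def uCoeff (n : ℕ) (κ a : ℝ) (P : (Fin n → ℕ) → MvPolynomial (Fin n) ℝ)
    (B : (Fin n → ℕ) → (Fin n → ℕ) → ℝ) (l m : Fin n → ℕ) : ℝ :=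
  2 ^ (wt n l - wt n m) *
    ∑ c ∈ chainsLM n l m (wt n l - wt n m),
      ∏ k : Fin (wt n l - wt n m),
        evalr n ℝ (P (c k.castSucc)) (fun _ => 1) / evalr n ℝ (P (c k.succ)) (fun _ => 1)
          * B (c k.castSucc) (c k.succ)
          / (a * (((k : ℕ) : ℝ) + 1) + dEig n κ l - dEig n κ (c k.succ))

/-! ### Hypergeometric data -/

def ascPoch (β : ℝ) (m : ℕ) : ℝ := ∏ j ∈ Finset.range m, (β + (j : ℝ))

/-- generalised Pochhammer symbol `[α]^{(κ)}_λ`. -/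
def genPoch (n : ℕ) (κ α : ℝ) (l : Fin n → ℕ) : ℝ :=
  ∏ i : Fin n, ascPoch (α - κ * ((i : ℕ) : ℝ)) (l i)

def conjPart (n : ℕ) (l : Fin n → ℕ) (j : ℕ) : ℕ :=
  (Finset.univ.filter (fun i => j ≤ l i)).card

/-- `h_λ = ∏_{(i,j)∈λ} (λᵢ − j + κ(λ′ⱼ − i) + 1)`. -/
def hJack (n : ℕ) (κ : ℝ) (l : Fin n → ℕ) : ℝ :=
  ∏ i : Fin n, ∏ j ∈ Finset.range (l i),
    ((l i : ℝ) - ((j : ℝ) + 1) + κ * ((conjPart n l (j+1) : ℝ) - (((i : ℕ) : ℝ) + 1)) + 1)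

/-! ### BC_n Jacobi polynomials -/

def coth (z : ℝ) : ℝ := Real.cosh z / Real.sinh z

def BCdomain (n : ℕ) : Set (Fin n → ℝ) :=
  {z | (∀ i, z i ≠ 0) ∧ ∀ i j : Fin n, i ≠ j → z i ≠ z j ∧ z i ≠ - z j}

def tmap (n : ℕ) (z : Fin n → ℝ) : Fin n → ℝ := fun i => -(Real.sinh (z i / 2))^2

def DBC (n : ℕ) (k1 k2 k3 : ℝ) (f : (Fin n → ℝ) → ℝ) : (Fin n → ℝ) → ℝ :=
  fun z => ∑ i, pd n ℝ i (pd n ℝ i f) z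
    + ∑ i, (k1 * coth (z i / 2) + 2 * k2 * coth (z i)) * pd n ℝ i f z
    + k3 * ∑ i, ∑ j ∈ Finset.univ.filter (fun j => i < j),
        (coth ((z i - z j)/2) * (pd n ℝ i f z - pd n ℝ j f z)
          + coth ((z i + z j)/2) * (pd n ℝ i f z + pd n ℝ j f z))

/-- `F` is the `BC_n` Jacobi polynomial attached to `l`, as a function of `z`. -/
def IsBCJacobi (n : ℕ) (k1 k2 k3 : ℝ) (P : (Fin n → ℕ) → MvPolynomial (Fin n) ℝ)
    (l : Fin n → ℕ) (F : (Fin n → ℝ) → ℝ) : Prop :=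
  (∃ w : (Fin n → ℕ) → ℝ, ∀ z : Fin n → ℝ,
    F z = (-4 : ℝ)^(wt n l) * eval (tmap n z) (P l)
      + ∑ m ∈ strictSubs n l, w m * eval (tmap n z) (P m)) ∧
  (∃ E : ℝ, ∀ z ∈ BCdomain n, DBC n k1 k2 k3 F z = E * F z)

/-! ### The higher order operators `D^B_d` -/

def DBsigned (n : ℕ) (𝕜 : Type*) [RCLike 𝕜] (κ a : ℝ) :
    ℕ → Bool → Fin n → ((Fin n → ℝ) → 𝕜) → ((Fin n → ℝ) → 𝕜)
  | 0, _, _, f => f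
  | (d+1), e, i, f => fun x =>
      (if e then (1 : 𝕜) else -1) *
        ( rc 𝕜 (x i) * pd n 𝕜 i (DBsigned n 𝕜 κ a d e i f) x
          + rc 𝕜 ((a - 1 + 2 / x i) / 2) *
              (DBsigned n 𝕜 κ a d e i f x - DBsigned n 𝕜 κ a d (!e) i f x)
          + rc 𝕜 (κ / 2) * ∑ j ∈ Finset.univ.erase i,
              rc 𝕜 ((x i + x j) / (x i - x j)) *
                (DBsigned n 𝕜 κ a d e i f x - DBsigned n 𝕜 κ a d e j f x)
          + rc 𝕜 (κ / 2) * ∑ j ∈ Finset.univ.erase i,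
              (DBsigned n 𝕜 κ a d e i f x - DBsigned n 𝕜 κ a d (!e) j f x) )

def DBd (n : ℕ) (𝕜 : Type*) [RCLike 𝕜] (κ a : ℝ) (d : ℕ)
    (f : (Fin n → ℝ) → 𝕜) : (Fin n → ℝ) → 𝕜 :=
  fun x => (1/2 : 𝕜) *
    (∑ i, DBsigned n 𝕜 κ a (2*d) true i f x + ∑ i, DBsigned n 𝕜 κ a (2*d) false i f x)

/-- `T` represents the operator `D^B_d` as a map on symmetric polynomials. -/
def Represents (n : ℕ) (𝕜 : Type*) [RCLike 𝕜] (κ a : ℝ) (d : ℕ)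
    (T : MvPolynomial (Fin n) 𝕜 → MvPolynomial (Fin n) 𝕜) : Prop :=
  ∀ p : MvPolynomial (Fin n) 𝕜, p.IsSymmetric →
    (T p).IsSymmetric ∧
    ∀ x ∈ DistinctNZ n, DBd n 𝕜 κ a d (evalr n 𝕜 p) x = evalr n 𝕜 (T p) x

def opMono (n : ℕ) (𝕜 : Type*) [RCLike 𝕜]
    (T : Fin n → (MvPolynomial (Fin n) 𝕜 → MvPolynomial (Fin n) 𝕜))
    (m : Fin n → ℕ) : MvPolynomial (Fin n) 𝕜 → MvPolynomial (Fin n) 𝕜 :=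
  (List.finRange n).foldr (fun i g => (T i)^[m i] ∘ g) id

/-- `Q(T₁,…,Tₙ)` applied to `f`. -/
def opEval (n : ℕ) (𝕜 : Type*) [RCLike 𝕜]
    (T : Fin n → (MvPolynomial (Fin n) 𝕜 → MvPolynomial (Fin n) 𝕜))
    (Q : MvPolynomial (Fin n) 𝕜) (f : MvPolynomial (Fin n) 𝕜) : MvPolynomial (Fin n) 𝕜 :=
  ∑ m ∈ Q.support, Q.coeff m • opMono n 𝕜 T (fun i => m i) f

/-- invariance under sign changes of the variables. -/
def SignInv (n : ℕ) (𝕜 : Type*) [RCLike 𝕜] (p : MvPolynomial (Fin n) 𝕜) : Prop :=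
  ∀ ε : Fin n → 𝕜, (∀ i, ε i = 1 ∨ ε i = -1) →
    ∀ x : Fin n → 𝕜, eval (fun i => ε i * x i) p = eval x p

/-! ### `ρ^B` and the `Δ̂` factors -/

def rhoB (n : ℕ) (κ a : ℝ) : Fin n → ℝ :=
  fun i => κ * ((n : ℝ) - 1 - ((i : ℕ) : ℝ)) + (a - 1) / 2

/-- the vector `λ + ρ^B`. -/
def shiftl (n : ℕ) (κ a : ℝ) (l : Fin n → ℕ) : Fin n → ℝ :=
  fun i => (l i : ℝ) + rhoB n κ a i

def dvP (κ z : ℝ) : ℝ := Real.Gamma (κ + z) / Real.Gamma z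
def dvM (κ z : ℝ) : ℝ := Real.Gamma (-κ + z + 1) / Real.Gamma (z + 1)
def dwP (a z : ℝ) : ℝ := Real.Gamma ((a - 1) / 2 + z) / Real.Gamma (2 * z)
def dwM (a z : ℝ) : ℝ := Real.Gamma (-((a - 1) / 2) + z + 1) / Real.Gamma (2 * z + 1)

def DeltaP (n : ℕ) (κ a : ℝ) (z : Fin n → ℝ) : ℝ :=
  (∏ i : Fin n, ∏ j ∈ Finset.univ.filter (fun j => i < j),
      dvP κ (z i - z j) * dvP κ (z i + z j)) * ∏ i, dwP a (z i)

def DeltaM (n : ℕ) (κ a : ℝ) (z : Fin n → ℝ) : ℝ :=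
  (∏ i : Fin n, ∏ j ∈ Finset.univ.filter (fun j => i < j),
      dvM κ (z i - z j) * dvM κ (z i + z j)) * ∏ i, dwM a (z i)

/-- `t` is not a pole of the Gamma function. -/
def GoodArg (t : ℝ) : Prop := ∀ k : ℕ, t ≠ -(k : ℝ)

def GoodDelta (n : ℕ) (κ a : ℝ) (z : Fin n → ℝ) : Prop :=
  (∀ i j : Fin n, i < j →
    GoodArg (κ + (z i - z j)) ∧ GoodArg (z i - z j) ∧
    GoodArg (κ + (z i + z j)) ∧ GoodArg (z i + z j)) ∧
  ∀ i, GoodArg ((a - 1) / 2 + z i) ∧ GoodArg (2 * z i)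

def vB (κ z : ℝ) : ℝ := (κ + z) / z
def wB (a z : ℝ) : ℝ := ((a - 1) / 2 + z) / (2 * z * (2 * z + 1))

/-- renormalised Bessel polynomials `Ỹ_λ`, as functions, given the family `B` of
monic Bessel polynomials. -/
def Ytil (n : ℕ) (κ a : ℝ) (B : (Fin n → ℕ) → MvPolynomial (Fin n) ℝ)
    (m : Fin n → ℕ) (x : Fin n → ℝ) : ℝ :=
  (1 / 2 ^ (wt n m)) * (DeltaP n κ a (rhoB n κ a) / DeltaP n κ a (shiftl n κ a m))
    * MvPolynomial.eval x (B m)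

def addE (n : ℕ) (i : Fin n) (l : Fin n → ℕ) : Fin n → ℕ := Function.update l i (l i + 1)
def subE (n : ℕ) (i : Fin n) (l : Fin n → ℕ) : Fin n → ℕ := Function.update l i (l i - 1)

def VhatP (n : ℕ) (κ a : ℝ) (i : Fin n) (z : Fin n → ℝ) : ℝ :=
  wB a (z i) * ∏ j ∈ Finset.univ.erase i, vB κ (z i + z j) * vB κ (z i - z j)

def VhatM (n : ℕ) (κ a : ℝ) (i : Fin n) (z : Fin n → ℝ) : ℝ :=
  wB a (-(z i)) * ∏ j ∈ Finset.univ.erase i, vB κ (-(z i) + z j) * vB κ (-(z i) - z j)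

/-! ### Data for the general Pieri formulae -/

def zeta (n : ℕ) (t : Fin n → Fin 3) : Fin n → ℤ := fun i => (t i : ℤ) - 1

def suppZ (n : ℕ) (ν : Fin n → ℤ) : Finset (Fin n) := Finset.univ.filter (fun i => ν i ≠ 0)

def EBr (n : ℕ) (r : ℕ) (x : Fin n → ℝ) : ℝ :=
  ((-1 : ℝ)^(r+1) / 2^r) *
    ∑ I ∈ Finset.powersetCard r (Finset.univ : Finset (Fin n)), ∏ i ∈ I, x i

def VhatSet (n : ℕ) (κ a : ℝ) (ν : Fin n → ℤ) (J : Finset (Fin n)) (z : Fin n → ℝ) : ℝ :=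
  (∏ i ∈ suppZ n ν, wB a ((ν i : ℝ) * z i))
  * (∏ i ∈ suppZ n ν, ∏ i' ∈ (suppZ n ν).filter (fun i' => i < i'),
      vB κ ((ν i : ℝ) * z i + (ν i' : ℝ) * z i')
        * vB κ ((ν i : ℝ) * z i + (ν i' : ℝ) * z i' + 1))
  * ∏ i ∈ suppZ n ν, ∏ j ∈ J,
      vB κ ((ν i : ℝ) * z i + z j) * vB κ ((ν i : ℝ) * z i - z j)

def UhatSet (n : ℕ) (κ a : ℝ) (J : Finset (Fin n)) (p : ℕ) (z : Fin n → ℝ) : ℝ :=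
  (-1 : ℝ)^p * ∑ t : Fin n → Fin 3,
    (if suppZ n (zeta n t) ⊆ J ∧ (suppZ n (zeta n t)).card = p then
      (∏ k ∈ suppZ n (zeta n t), wB a ((zeta n t k : ℝ) * z k))
      * (∏ k ∈ suppZ n (zeta n t), ∏ k' ∈ (suppZ n (zeta n t)).filter (fun k' => k < k'),
          vB κ ((zeta n t k : ℝ) * z k + (zeta n t k' : ℝ) * z k')
            * vB κ (-((zeta n t k : ℝ) * z k) - (zeta n t k' : ℝ) * z k' - 1))
      * ∏ k ∈ suppZ n (zeta n t), ∏ j ∈ J \ suppZ n (zeta n t),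
          vB κ ((zeta n t k : ℝ) * z k + z j) * vB κ ((zeta n t k : ℝ) * z k - z j)
    else 0)

def addZ (n : ℕ) (l : Fin n → ℕ) (ν : Fin n → ℤ) : Fin n → ℕ :=
  fun i => ((l i : ℤ) + ν i).toNat

/-! ### The measure -/

def WB (n : ℕ) (κ a : ℝ) (x : Fin n → ℝ) : ℝ :=
  (∏ i, (x i) ^ (a - 2) * Real.exp (-2 / x i)) *
    ∏ i : Fin n, ∏ j ∈ Finset.univ.filter (fun j => i < j), |x i - x j| ^ (2 * κ)

def muB (n : ℕ) (κ a : ℝ) : Measure (Fin n → ℝ) :=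
  (volume.restrict {x : Fin n → ℝ | ∀ i, 0 < x i}).withDensity
    (fun x => ENNReal.ofReal (WB n κ a x))

end


/-! ### Auxiliary lemmas for the proof of Statement 14 -/

section Aux

open Set

theorem exp_low (k : ℕ) (hk : 1 ≤ k) (t : ℝ) (ht : 0 < t) : Real.exp (-(2/t)) ≤ ((k:ℝ)*t/2)^k := by
  have h2t : 0 < 2/t := by positivity
  have hkp : (0:ℝ) < k := by exact_mod_cast hk
  have h1 : (2/t)/k ≤ Real.exp ((2/t)/k) := (Real.add_one_le_exp _).trans' (by linarith)
  have h2 : ((2/t)/k)^k ≤ Real.exp (2/t) := by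
    calc ((2/t)/k)^k ≤ (Real.exp ((2/t)/k))^k := by
          apply pow_le_pow_left₀ (by positivity) h1
      _ = Real.exp (2/t) := by
          rw [← Real.exp_nat_mul]; congr 1; field_simp
  have h3 : (0:ℝ) < ((2/t)/k)^k := by positivity
  rw [Real.exp_neg, inv_le_comm₀ (Real.exp_pos _) (by positivity)]
  calc (((k:ℝ)*t/2)^k)⁻¹ = ((2/t)/k)^k := by
        rw [← inv_pow]; congr 1; field_simp
    _ ≤ Real.exp (2/t) := h2

noncomputable def phi (p : ℕ) (q c : ℝ) (t : ℝ) : ℝ :=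
  (1+t)^p * ((1+t)^q * (t^c * Real.exp (-(2/t))))

theorem phi_meas (p : ℕ) (q c : ℝ) : Measurable (phi p q c) := by
  unfold phi
  have h1 : Measurable fun t : ℝ => 1 + t := measurable_const.add measurable_id
  exact ((h1.pow_const p).mul ((h1.pow_const q).mul
    ((measurable_id.pow_const c).mul
      (Real.measurable_exp.comp (measurable_const.div measurable_id).neg))))

theorem phi_nonneg (p : ℕ) (q c : ℝ) (t : ℝ) (ht : 0 < t) : 0 ≤ phi p q c t := by
  unfold phi
  have : (0:ℝ) ≤ 1 + t := by linarith
  positivity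

theorem phi_integrable (p : ℕ) (q c : ℝ) (hq : 0 ≤ q) (h : c + (p:ℝ) + q < -1) :
    MeasureTheory.IntegrableOn (phi p q c) (Ioi 0) := by
  have key : Ioc (0:ℝ) 1 ∪ Ioi 1 = Ioi 0 := Ioc_union_Ioi_eq_Ioi zero_le_one
  rw [← key, MeasureTheory.integrableOn_union]
  constructor
  · set k : ℕ := ⌈2 - c⌉₊ + 1 with hkdef
    have hk1 : 1 ≤ k := Nat.le_add_left 1 _
    have hck : 0 ≤ c + k := by
      have h2 : 2 - c ≤ (⌈2 - c⌉₊ : ℝ) + 1 := by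
        rcases le_or_gt (2 - c) 0 with h'|h'
        · have : (0:ℝ) ≤ (⌈2-c⌉₊:ℝ) + 1 := by positivity
          linarith
        · have := Nat.le_ceil (2 - c); linarith
      have : 2 - c ≤ (k:ℝ) := by push_cast [hkdef]; linarith
      linarith
    apply MeasureTheory.Measure.integrableOn_of_bounded (M := 2^p * (2^q * ((k:ℝ)/2)^k))
    · exact ((measure_mono Ioc_subset_Icc_self).trans_lt (by simp)).ne
    · exact (phi_meas p q c).aestronglyMeasurable
    · apply (MeasureTheory.ae_restrict_iff' measurableSet_Ioc).2 (Filter.Eventually.of_forall _)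
      intro t ht
      obtain ⟨ht0, ht1⟩ := ht
      have h1t : (0:ℝ) ≤ 1 + t := by linarith
      have hb1 : (1+t)^p ≤ 2^p := by apply pow_le_pow_left₀ h1t (by linarith)
      have hb2 : (1+t)^q ≤ 2^q := Real.rpow_le_rpow h1t (by linarith) hq
      have hb3 : t^c * Real.exp (-(2/t)) ≤ ((k:ℝ)/2)^k := by
        calc t^c * Real.exp (-(2/t)) ≤ t^c * (((k:ℝ)*t/2))^k :=
              mul_le_mul_of_nonneg_left (exp_low k hk1 t ht0) (Real.rpow_nonneg ht0.le c)
          _ = ((k:ℝ)/2)^k * (t^c * t^(k:ℕ)) := by ring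
          _ = ((k:ℝ)/2)^k * t^(c + (k:ℕ)) := by
              rw [← Real.rpow_natCast t k, ← Real.rpow_add ht0]
          _ ≤ ((k:ℝ)/2)^k * 1 :=
              mul_le_mul_of_nonneg_left (Real.rpow_le_one ht0.le ht1 hck) (by positivity)
          _ = ((k:ℝ)/2)^k := mul_one _
      rw [Real.norm_eq_abs, abs_of_nonneg (phi_nonneg p q c t ht0)]
      unfold phi
      apply mul_le_mul hb1 _ (by positivity) (by positivity)
      apply mul_le_mul hb2 hb3 (by positivity) (by positivity)
  · have hint : MeasureTheory.IntegrableOn (fun t : ℝ => 2^p * 2^q * t^(c + (p:ℝ) + q)) (Ioi 1) :=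
      (integrableOn_Ioi_rpow_of_lt h one_pos).const_mul _
    apply MeasureTheory.Integrable.mono' hint ((phi_meas p q c).aestronglyMeasurable)
    apply (MeasureTheory.ae_restrict_iff' measurableSet_Ioi).2 (Filter.Eventually.of_forall _)
    intro t ht
    simp only [mem_Ioi] at ht
    have ht0 : (0:ℝ) < t := lt_trans one_pos ht
    have hb1 : (1+t)^p ≤ 2^p * t^(p:ℕ) := by
      calc (1+t)^p ≤ (2*t)^p := by apply pow_le_pow_left₀ (by linarith) (by linarith)
        _ = 2^p * t^(p:ℕ) := mul_pow 2 t p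
    have hb2 : (1+t)^q ≤ 2^q * t^q := by
      calc (1+t)^q ≤ (2*t)^q := Real.rpow_le_rpow (by linarith) (by linarith) hq
        _ = 2^q * t^q := Real.mul_rpow (by norm_num) ht0.le
    have hb3 : t^c * Real.exp (-(2/t)) ≤ t^c * 1 := by
      apply mul_le_mul_of_nonneg_left _ (Real.rpow_nonneg ht0.le c)
      rw [← Real.exp_zero]
      apply Real.exp_le_exp.2
      have : 0 < 2/t := by positivity
      linarith
    rw [Real.norm_eq_abs, abs_of_nonneg (phi_nonneg p q c t ht0)]
    unfold phi
    calc (1+t)^p * ((1+t)^q * (t^c * Real.exp (-(2/t))))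
        ≤ (2^p * t^(p:ℕ)) * ((2^q * t^q) * (t^c * 1)) := by
          apply mul_le_mul hb1 _ (by positivity) (by positivity)
          apply mul_le_mul hb2 (hb3.trans_eq rfl) (by positivity) (by positivity)
      _ = 2^p * 2^q * (t^(p:ℕ) * t^q * t^c) := by ring
      _ = 2^p * 2^q * t^(c + (p:ℝ) + q) := by
          rw [← Real.rpow_natCast t p, ← Real.rpow_add ht0, ← Real.rpow_add ht0]
          ring_nf

theorem poly_bound (n m : ℕ) (f : MvPolynomial (Fin n) ℝ) (hf : f.totalDegree ≤ m)
    (x : Fin n → ℝ) :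
    |MvPolynomial.eval x f| ≤ (∑ d ∈ f.support, |f.coeff d|) * ∏ i, (1+|x i|)^m := by
  rw [MvPolynomial.eval_eq']
  calc |∑ d ∈ f.support, f.coeff d * ∏ i, x i ^ d i|
      ≤ ∑ d ∈ f.support, |f.coeff d * ∏ i, x i ^ d i| := Finset.abs_sum_le_sum_abs _ _
    _ ≤ ∑ d ∈ f.support, (|f.coeff d| * ∏ i, (1+|x i|)^m) := by
        apply Finset.sum_le_sum; intro d hd
        rw [abs_mul]
        apply mul_le_mul_of_nonneg_left _ (abs_nonneg _)
        rw [Finset.abs_prod]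
        apply Finset.prod_le_prod (fun i _ => abs_nonneg _)
        intro i _
        rw [abs_pow]
        have hdi : d i ≤ m := by
          have h1 : d i ≤ ∑ j, d j :=
            Finset.single_le_sum (fun j _ => Nat.zero_le _) (Finset.mem_univ i)
          have h2 : (∑ j, d j) = d.sum fun _ e => e :=
            (Finsupp.sum_fintype d (fun _ e => e) (fun _ => rfl)).symm
          have h3 := MvPolynomial.le_totalDegree hd
          rw [h2] at h1
          omega
        calc |x i| ^ d i ≤ (1+|x i|)^(d i) :=
              pow_le_pow_left₀ (abs_nonneg _) (by linarith [abs_nonneg (x i)]) _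
          _ ≤ (1+|x i|)^m :=
              pow_le_pow_right₀ (by linarith [abs_nonneg (x i)]) hdi
    _ = (∑ d ∈ f.support, |f.coeff d|) * ∏ i, (1+|x i|)^m := (Finset.sum_mul _ _ _).symm

theorem card_split (n : ℕ) (i : Fin n) :
    (Finset.univ.filter (fun j => i < j)).card + (Finset.univ.filter (fun j => j < i)).card
      = n - 1 := by
  have hu : (Finset.univ.filter (fun j => i < j)) ∪ (Finset.univ.filter (fun j => j < i))
      = Finset.univ.erase i := by
    ext j
    simp only [Finset.mem_union, Finset.mem_filter, Finset.mem_univ, true_and, Finset.mem_erase,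
      and_true]
    constructor
    · rintro (h|h) <;> [exact (ne_of_gt h); exact (ne_of_lt h)]
    · intro h; exact (lt_or_gt_of_ne h.symm).imp id id
  have hd : Disjoint (Finset.univ.filter (fun j => i < j))
      (Finset.univ.filter (fun j => j < i)) := by
    rw [Finset.disjoint_left]
    intro j hj hj'
    simp only [Finset.mem_filter] at hj hj'
    exact absurd (hj.2.trans hj'.2) (lt_irrefl i)
  rw [← Finset.card_union_of_disjoint hd, hu, Finset.card_erase_of_mem (Finset.mem_univ i)]
  simp

theorem pair_bound (n : ℕ) (hn : 1 ≤ n) (κ : ℝ) (hκ : 0 ≤ κ) (x : Fin n → ℝ)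
    (hx : ∀ i, 0 < x i) :
    ∏ i : Fin n, ∏ j ∈ Finset.univ.filter (fun j => i < j), |x i - x j| ^ (2*κ)
      ≤ ∏ i, (1 + x i) ^ (2*κ*((n:ℝ)-1)) := by
  set g : Fin n → ℝ := fun i => (1 + x i) ^ (2*κ) with hg
  have hg0 : ∀ i, 0 ≤ g i := fun i => Real.rpow_nonneg (by linarith [hx i]) _
  have step1 : ∏ i : Fin n, ∏ j ∈ Finset.univ.filter (fun j => i < j), |x i - x j| ^ (2*κ)
      ≤ ∏ i : Fin n, ∏ j ∈ Finset.univ.filter (fun j => i < j), (g i * g j) := by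
    apply Finset.prod_le_prod
    · intro i _; exact Finset.prod_nonneg (fun j _ => Real.rpow_nonneg (abs_nonneg _) _)
    intro i _
    apply Finset.prod_le_prod (fun j _ => Real.rpow_nonneg (abs_nonneg _) _)
    intro j _
    have h1 : |x i - x j| ≤ (1 + x i) * (1 + x j) := by
      have := hx i; have := hx j
      rw [abs_sub_le_iff]; constructor <;> nlinarith
    calc |x i - x j| ^ (2*κ) ≤ ((1 + x i) * (1 + x j)) ^ (2*κ) :=
          Real.rpow_le_rpow (abs_nonneg _) h1 (by linarith)
      _ = g i * g j := Real.mul_rpow (by linarith [hx i]) (by linarith [hx j])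
  have step2 : ∏ i : Fin n, ∏ j ∈ Finset.univ.filter (fun j => i < j), (g i * g j)
      = ∏ i, g i ^ (n - 1) := by
    have e1 : ∀ i : Fin n, ∏ j ∈ Finset.univ.filter (fun j => i < j), (g i * g j)
        = g i ^ (Finset.univ.filter (fun j => i < j)).card
          * ∏ j ∈ Finset.univ.filter (fun j => i < j), g j := by
      intro i; rw [Finset.prod_mul_distrib, Finset.prod_const]
    simp_rw [e1]
    rw [Finset.prod_mul_distrib]
    have e2 : ∏ i : Fin n, ∏ j ∈ Finset.univ.filter (fun j => i < j), g j
        = ∏ j : Fin n, g j ^ (Finset.univ.filter (fun i => i < j)).card := by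
      rw [Finset.prod_comm' (t' := Finset.univ)
        (s' := fun j => Finset.univ.filter (fun i => i < j))]
      · simp_rw [Finset.prod_const]
      · intro i j; simp only [Finset.mem_filter, Finset.mem_univ, true_and, and_true]
    rw [e2, ← Finset.prod_mul_distrib]
    apply Finset.prod_congr rfl
    intro i _
    rw [← pow_add, card_split n i]
  have step3 : ∀ i : Fin n, g i ^ (n-1) = (1 + x i) ^ (2*κ*((n:ℝ)-1)) := by
    intro i
    rw [hg, ← Real.rpow_natCast ((1+x i) ^ (2*κ)) (n-1), ← Real.rpow_mul (by linarith [hx i])]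
    congr 1
    rw [Nat.cast_sub hn, Nat.cast_one]
  calc _ ≤ ∏ i : Fin n, ∏ j ∈ Finset.univ.filter (fun j => i < j), (g i * g j) := step1
    _ = ∏ i, g i ^ (n-1) := step2
    _ = ∏ i, (1 + x i) ^ (2*κ*((n:ℝ)-1)) := Finset.prod_congr rfl (fun i _ => step3 i)

theorem WB_meas (n : ℕ) (κ a : ℝ) : Measurable (WB n κ a) := by
  unfold WB
  apply Measurable.mul
  · apply Finset.measurable_prod
    intro i _
    exact ((measurable_pi_apply i).pow_const (a-2)).mul
      (Real.measurable_exp.comp (measurable_const.div (measurable_pi_apply i)))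
  · apply Finset.measurable_prod
    intro i _
    apply Finset.measurable_prod
    intro j _
    exact (((measurable_pi_apply i).sub (measurable_pi_apply j)).abs).pow_const (2*κ)

theorem WB_nonneg (n : ℕ) (κ a : ℝ) (x : Fin n → ℝ) (hx : ∀ i, 0 < x i) : 0 ≤ WB n κ a x := by
  unfold WB
  apply mul_nonneg
  · exact Finset.prod_nonneg fun i _ =>
      mul_nonneg (Real.rpow_nonneg (hx i).le _) (Real.exp_nonneg _)
  · exact Finset.prod_nonneg fun i _ => Finset.prod_nonneg fun j _ =>
      Real.rpow_nonneg (abs_nonneg _) _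

theorem S_meas (n : ℕ) : MeasurableSet {x : Fin n → ℝ | ∀ i, 0 < x i} := by
  have : {x : Fin n → ℝ | ∀ i, 0 < x i} = ⋂ i, (fun x : Fin n → ℝ => x i) ⁻¹' (Ioi 0) := by
    ext x; simp [Set.mem_iInter]
  rw [this]
  exact MeasurableSet.iInter fun i => (measurable_pi_apply i) measurableSet_Ioi

end Aux

open scoped ENNReal NNReal

set_option maxHeartbeats 2000000 in
theorem stmt14 (n : ℕ) (hn : 1 ≤ n) (m : ℕ) (κ a : ℝ) (hκ : 0 ≤ κ) :
    (∀ f : MvPolynomial (Fin n) ℝ, f.IsSymmetric → f.totalDegree ≤ m →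
      Integrable (fun x => (MvPolynomial.eval x f) ^ 2) (muB n κ a))
      ↔ a < -2 * ((m : ℝ) + κ * ((n : ℝ) - 1)) + 1 := by
  have hn1 : (1:ℝ) ≤ (n:ℝ) := by exact_mod_cast hn
  have hq0 : 0 ≤ 2*κ*((n:ℝ)-1) := mul_nonneg (by linarith) (by linarith)
  have hSm : MeasurableSet {x : Fin n → ℝ | ∀ i, 0 < x i} := S_meas n
  have hwm : Measurable fun x : Fin n → ℝ => ENNReal.ofReal (WB n κ a x) :=
    (WB_meas n κ a).ennreal_ofReal
  constructor
  · intro h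
    by_contra hcon
    push_neg at hcon
    have hn0 : 0 < n := hn
    set i0 : Fin n := ⟨0, hn0⟩ with hi0
    set R : ℝ := 2*(n:ℝ)+4 with hR
    have hR1 : (1:ℝ) ≤ R := by rw [hR]; linarith
    have hR0 : (0:ℝ) < R := by linarith
    -- the test polynomial
    set f : MvPolynomial (Fin n) ℝ := (∑ i, MvPolynomial.X i)^m with hf
    have hsym : f.IsSymmetric := by
      intro e
      rw [hf, map_pow, map_sum]
      simp_rw [MvPolynomial.rename_X]
      rw [Equiv.sum_comp e (fun i => (MvPolynomial.X i : MvPolynomial (Fin n) ℝ))]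
    have hdeg : f.totalDegree ≤ m := by
      rw [hf]
      refine le_trans (MvPolynomial.totalDegree_pow _ m) ?_
      have h1 : (∑ i : Fin n, (MvPolynomial.X i : MvPolynomial (Fin n) ℝ)).totalDegree ≤ 1 := by
        refine le_trans (MvPolynomial.totalDegree_finset_sum _ _) ?_
        apply Finset.sup_le
        intro i _
        rw [MvPolynomial.totalDegree_X]
      calc m * (∑ i : Fin n, (MvPolynomial.X i : MvPolynomial (Fin n) ℝ)).totalDegree
          ≤ m * 1 := Nat.mul_le_mul_left m h1
        _ = m := Nat.mul_one m
    have heval : ∀ x : Fin n → ℝ, MvPolynomial.eval x f = (∑ i, x i)^m := by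
      intro x; rw [hf, map_pow, map_sum]; simp
    have hint := h f hsym hdeg
    -- the boxes
    set B : ℕ → Set (Fin n → ℝ) := fun k => Set.univ.pi
      (fun i => if i = i0 then Set.Ioo ((2:ℝ)^k * R) ((2:ℝ)^(k+1)*R)
        else Set.Ioo (((i:ℕ):ℝ)+1) (((i:ℕ):ℝ)+1+1/2)) with hB
    have hBmeas : ∀ k, MeasurableSet (B k) := by
      intro k
      apply MeasurableSet.univ_pi
      intro i
      by_cases hi : i = i0 <;> simp [hi, measurableSet_Ioo]
    have htk : ∀ k : ℕ, (1:ℝ) ≤ 2^k := fun k => one_le_pow₀ (by norm_num)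
    have htkR : ∀ k : ℕ, (1:ℝ) ≤ 2^k * R := fun k =>
      one_le_mul_of_one_le_of_one_le (htk k) hR1
    -- membership facts
    have hmem0 : ∀ k, ∀ x ∈ B k, (2:ℝ)^k * R < x i0 ∧ x i0 < 2*((2:ℝ)^k * R) := by
      intro k x hx
      have := hx i0 (Set.mem_univ i0)
      simp only [if_pos rfl] at this
      obtain ⟨h1, h2⟩ := this
      refine ⟨h1, ?_⟩
      calc x i0 < (2:ℝ)^(k+1)*R := h2
        _ = 2*((2:ℝ)^k * R) := by ring
    have hmemi : ∀ k, ∀ x ∈ B k, ∀ i : Fin n, i ≠ i0 →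
        1 ≤ x i ∧ x i ≤ (n:ℝ) + 2 ∧ ((i:ℕ):ℝ)+1 < x i ∧ x i < ((i:ℕ):ℝ)+1+1/2 := by
      intro k x hx i hi
      have := hx i (Set.mem_univ i)
      simp only [if_neg hi] at this
      obtain ⟨h1, h2⟩ := this
      have hcast : ((i:ℕ):ℝ) ≤ (n:ℝ) - 1 := by
        have := i.isLt
        have : ((i:ℕ):ℝ) + 1 ≤ (n:ℝ) := by exact_mod_cast Nat.succ_le_of_lt this
        linarith
      have h0 : (0:ℝ) ≤ ((i:ℕ):ℝ) := Nat.cast_nonneg _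
      exact ⟨by linarith, by linarith, h1, h2⟩
    have hBpos : ∀ k, ∀ x ∈ B k, ∀ i, 0 < x i := by
      intro k x hx i
      by_cases hi : i = i0
      · subst hi
        have := (hmem0 k x hx).1
        have := htkR k
        linarith
      · have := (hmemi k x hx i hi).1; linarith
    have hBS : ∀ k, B k ⊆ {x : Fin n → ℝ | ∀ i, 0 < x i} := by
      intro k x hx
      exact fun i => hBpos k x hx i
    -- disjointness
    have hdisj : Pairwise (Function.onFun Disjoint B) := by
      rw [pairwise_disjoint_on]
      intro k l hkl
      rw [Set.disjoint_left]
      intro x hxk hxl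
      have h1 := (hmem0 k x hxk).2
      have h2 := (hmem0 l x hxl).1
      have h3 : (2:ℝ)^(k+1) ≤ (2:ℝ)^l := pow_le_pow_right₀ (by norm_num) hkl
      have h4 : (2:ℝ)^(k+1) * R ≤ (2:ℝ)^l * R := by
        apply mul_le_mul_of_nonneg_right h3 (by linarith)
      have h5 : 2*((2:ℝ)^k * R) = (2:ℝ)^(k+1) * R := by ring
      linarith
    -- volume of boxes
    have hvol : ∀ k, volume (B k)
        = ENNReal.ofReal ((2:ℝ)^k * R) * ENNReal.ofReal ((1:ℝ)/2) ^ (n-1) := by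
      intro k
      rw [hB]
      rw [volume_pi_pi]
      rw [← Finset.mul_prod_erase Finset.univ _ (Finset.mem_univ i0)]
      have e1 : volume (if i0 = i0 then Set.Ioo ((2:ℝ)^k * R) ((2:ℝ)^(k+1)*R)
          else Set.Ioo (((i0:ℕ):ℝ)+1) (((i0:ℕ):ℝ)+1+1/2)) = ENNReal.ofReal ((2:ℝ)^k * R) := by
        rw [if_pos rfl, Real.volume_Ioo]
        congr 1
        ring
      rw [e1]
      congr 1
      have e2 : ∀ i ∈ Finset.univ.erase i0,
          volume (if i = i0 then Set.Ioo ((2:ℝ)^k * R) ((2:ℝ)^(k+1)*R)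
            else Set.Ioo (((i:ℕ):ℝ)+1) (((i:ℕ):ℝ)+1+1/2)) = ENNReal.ofReal ((1:ℝ)/2) := by
        intro i hi
        rw [if_neg (Finset.mem_erase.1 hi).1, Real.volume_Ioo]
        congr 1
        ring
      rw [Finset.prod_congr rfl e2, Finset.prod_const,
        Finset.card_erase_of_mem (Finset.mem_univ i0), Finset.card_univ, Fintype.card_fin]
    -- constants
    set c1 : ℝ := min 1 (((n:ℝ)+2)^(a-2)) with hc1
    have hc1pos : 0 < c1 := lt_min one_pos (Real.rpow_pos_of_pos (by positivity) _)
    set K1 : ℝ := Real.exp (-2) * (c1 * Real.exp (-2))^(n-1) with hK1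
    have hK1pos : 0 < K1 := by positivity
    set c2 : ℝ := ∏ i ∈ Finset.univ.erase i0,
        ∏ j ∈ Finset.univ.filter (fun j => i < j), ((1:ℝ)/2)^(2*κ) with hc2
    have hc2pos : 0 < c2 := Finset.prod_pos fun i _ => Finset.prod_pos fun j _ =>
      Real.rpow_pos_of_pos (by norm_num) _
    set K2 : ℝ := c2 / (2:ℝ)^(2*κ*((n:ℝ)-1)) with hK2
    have hK2pos : 0 < K2 := div_pos hc2pos (Real.rpow_pos_of_pos (by norm_num) _)
    set K : ℝ := K1 * K2 with hK
    have hKpos : 0 < K := mul_pos hK1pos hK2pos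
    -- pointwise lower bound
    have key : ∀ k : ℕ, ∀ x ∈ B k,
        K / (2*((2:ℝ)^k*R)) ≤ WB n κ a x * (MvPolynomial.eval x f)^2 := by
      intro k x hx
      have hxpos : ∀ i, 0 < x i := fun i => hBpos k x hx i
      obtain ⟨hx0l, hx0r⟩ := hmem0 k x hx
      have ht1 : (1:ℝ) ≤ (2:ℝ)^k * R := htkR k
      have ht0 : (0:ℝ) < (2:ℝ)^k * R := by linarith
      have hx0pos : 0 < x i0 := hxpos i0
      have hx01 : (1:ℝ) ≤ x i0 := by linarith
      have hx0R : R ≤ x i0 := by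
        have hRt : R ≤ (2:ℝ)^k * R := le_mul_of_one_le_left (by linarith) (htk k)
        linarith
      have hcard' : (Finset.univ.erase i0).card = n - 1 := by
        rw [Finset.card_erase_of_mem (Finset.mem_univ i0), Finset.card_univ, Fintype.card_fin]
      -- eval lower bound
      have hA : x i0 ^ (2*m) ≤ (MvPolynomial.eval x f)^2 := by
        rw [heval x]
        have h1 : x i0 ≤ ∑ i, x i :=
          Finset.single_le_sum (fun i _ => (hxpos i).le) (Finset.mem_univ i0)
        calc x i0 ^ (2*m) = (x i0 ^ m)^2 := by rw [← pow_mul, mul_comm m 2]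
          _ ≤ ((∑ i, x i)^m)^2 := by
              apply pow_le_pow_left₀ (pow_nonneg hx0pos.le m)
              exact pow_le_pow_left₀ hx0pos.le h1 m
      -- P lower bound
      have hP : x i0 ^ (a-2) * K1 ≤ ∏ i, ((x i)^(a-2) * Real.exp (-2 / x i)) := by
        rw [← Finset.mul_prod_erase Finset.univ _ (Finset.mem_univ i0), hK1]
        have h1 : x i0 ^ (a-2) * (Real.exp (-2) * (c1 * Real.exp (-2))^(n-1))
            = (x i0 ^ (a-2) * Real.exp (-2)) * (c1 * Real.exp (-2))^(n-1) := by ring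
        rw [h1]
        apply mul_le_mul
        · apply mul_le_mul_of_nonneg_left _ (Real.rpow_nonneg hx0pos.le _)
          apply Real.exp_le_exp.2
          have h2 : 2 / x i0 ≤ 2 := by rw [div_le_iff₀ hx0pos]; linarith
          have hneg : (-2:ℝ) / x i0 = -(2 / x i0) := neg_div _ _
          rw [hneg]; linarith
        · calc (c1 * Real.exp (-2))^(n-1)
              = ∏ _i ∈ Finset.univ.erase i0, (c1 * Real.exp (-2)) := by
                rw [Finset.prod_const, hcard']
            _ ≤ ∏ i ∈ Finset.univ.erase i0, ((x i)^(a-2) * Real.exp (-2 / x i)) := by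
                apply Finset.prod_le_prod (fun i _ => by positivity)
                intro i hi
                obtain ⟨hi1, hi2, _, _⟩ := hmemi k x hx i (Finset.mem_erase.1 hi).1
                apply mul_le_mul
                · rw [hc1]
                  rcases le_or_gt 0 (a-2) with hcase|hcase
                  · calc min 1 (((n:ℝ)+2)^(a-2)) ≤ 1 := min_le_left _ _
                      _ = (1:ℝ)^(a-2) := (Real.one_rpow _).symm
                      _ ≤ (x i)^(a-2) := Real.rpow_le_rpow zero_le_one hi1 hcase
                  · calc min 1 (((n:ℝ)+2)^(a-2)) ≤ ((n:ℝ)+2)^(a-2) := min_le_right _ _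
                      _ ≤ (x i)^(a-2) :=
                        Real.rpow_le_rpow_of_nonpos (by linarith) hi2 hcase.le
                · apply Real.exp_le_exp.2
                  have h2 : 2 / x i ≤ 2 := by rw [div_le_iff₀ (by linarith)]; linarith
                  have hneg : (-2:ℝ) / x i = -(2/x i) := neg_div _ _
                  rw [hneg]; linarith
                · exact Real.exp_nonneg _
                · exact Real.rpow_nonneg (by linarith) _
        · positivity
        · have := Real.rpow_nonneg hx0pos.le (a-2)
          have := Real.exp_nonneg (-2 / x i0)
          positivity
      -- pairs lower bound
      have hQ : (x i0 ^ (2*κ*((n:ℝ)-1)) / (2:ℝ)^(2*κ*((n:ℝ)-1))) * c2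
          ≤ ∏ i : Fin n, ∏ j ∈ Finset.univ.filter (fun j => i < j), |x i - x j|^(2*κ) := by
        rw [← Finset.mul_prod_erase Finset.univ _ (Finset.mem_univ i0)]
        have hfil : Finset.univ.filter (fun j => i0 < j) = Finset.univ.erase i0 := by
          ext j
          simp only [Finset.mem_filter, Finset.mem_univ, true_and, Finset.mem_erase, and_true]
          constructor
          · intro hj; exact ne_of_gt hj
          · intro hj
            exact lt_of_le_of_ne (Fin.mk_le_of_le_val (Nat.zero_le _)) (Ne.symm hj)
        apply mul_le_mul
        · rw [hfil]
          have h1 : ∀ j ∈ Finset.univ.erase i0, (x i0 / 2)^(2*κ) ≤ |x i0 - x j|^(2*κ) := by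
            intro j hj
            obtain ⟨_, hxj, _, _⟩ := hmemi k x hx j (Finset.mem_erase.1 hj).1
            have h2 : x i0 / 2 ≤ x i0 - x j := by
              rw [hR] at hx0R
              linarith
            apply Real.rpow_le_rpow (by positivity) _ (by linarith)
            calc x i0 / 2 ≤ x i0 - x j := h2
              _ ≤ |x i0 - x j| := le_abs_self _
          calc x i0 ^ (2*κ*((n:ℝ)-1)) / (2:ℝ)^(2*κ*((n:ℝ)-1))
              = ((x i0 / 2)^(2*κ))^(n-1) := by
                rw [← Real.div_rpow hx0pos.le (by norm_num)]
                rw [← Real.rpow_natCast ((x i0/2)^(2*κ)) (n-1),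
                  ← Real.rpow_mul (by positivity)]
                congr 1
                rw [Nat.cast_sub hn, Nat.cast_one]
            _ = ∏ _j ∈ Finset.univ.erase i0, (x i0 / 2)^(2*κ) := by
                rw [Finset.prod_const, hcard']
            _ ≤ ∏ j ∈ Finset.univ.erase i0, |x i0 - x j|^(2*κ) :=
                Finset.prod_le_prod (fun j _ => by positivity) h1
        · rw [hc2]
          apply Finset.prod_le_prod (fun i _ => Finset.prod_nonneg fun j _ => by positivity)
          intro i hi
          apply Finset.prod_le_prod (fun j _ => by positivity)
          intro j hj
          have hii := (Finset.mem_erase.1 hi).1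
          have hij : i < j := (Finset.mem_filter.1 hj).2
          have hjj : j ≠ i0 := by
            intro hji
            rw [hji] at hij
            exact absurd hij (not_lt.2 (Fin.mk_le_of_le_val (Nat.zero_le _)))
          obtain ⟨_, _, _, hi4⟩ := hmemi k x hx i hii
          obtain ⟨_, _, hj3, _⟩ := hmemi k x hx j hjj
          have hcast : ((i:ℕ):ℝ) + 1 ≤ ((j:ℕ):ℝ) := by
            have hlt : (i:ℕ) < (j:ℕ) := hij
            exact_mod_cast Nat.succ_le_of_lt hlt
          have h2 : (1:ℝ)/2 ≤ x j - x i := by linarith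
          apply Real.rpow_le_rpow (by norm_num) _ (by linarith)
          calc (1:ℝ)/2 ≤ x j - x i := h2
            _ ≤ |x i - x j| := by rw [abs_sub_comm]; exact le_abs_self _
        · positivity
        · exact Finset.prod_nonneg fun j _ => Real.rpow_nonneg (abs_nonneg _) _
      -- combine
      have hWBlow : (x i0 ^ (a-2) * K1)
          * ((x i0 ^ (2*κ*((n:ℝ)-1)) / (2:ℝ)^(2*κ*((n:ℝ)-1))) * c2) ≤ WB n κ a x := by
        unfold WB
        apply mul_le_mul hP hQ
        · have h5 : (0:ℝ) ≤ x i0 ^ (2*κ*((n:ℝ)-1)) / (2:ℝ)^(2*κ*((n:ℝ)-1)) :=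
            div_nonneg (Real.rpow_nonneg hx0pos.le _) (Real.rpow_nonneg (by norm_num) _)
          exact mul_nonneg h5 hc2pos.le
        · exact Finset.prod_nonneg fun i _ =>
            mul_nonneg (Real.rpow_nonneg (hxpos i).le _) (Real.exp_nonneg _)
      have hE : (0:ℝ) ≤ ((a-2) + 2*κ*((n:ℝ)-1) + 2*(m:ℝ)) + 1 := by linarith
      have hx0E : 1/(2*((2:ℝ)^k*R)) ≤ x i0 ^ ((a-2) + 2*κ*((n:ℝ)-1) + 2*(m:ℝ)) := by
        have h1 : x i0 ^ ((a-2) + 2*κ*((n:ℝ)-1) + 2*(m:ℝ))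
            = x i0 ^ (((a-2) + 2*κ*((n:ℝ)-1) + 2*(m:ℝ))+1) / x i0 := by
          rw [Real.rpow_add_one (ne_of_gt hx0pos)]
          field_simp
        rw [h1]
        have h2 : (1:ℝ) ≤ ((2:ℝ)^k*R) ^ (((a-2) + 2*κ*((n:ℝ)-1) + 2*(m:ℝ))+1) :=
          Real.one_le_rpow ht1 hE
        have h3 : ((2:ℝ)^k*R) ^ (((a-2) + 2*κ*((n:ℝ)-1) + 2*(m:ℝ))+1)
            ≤ x i0 ^ (((a-2) + 2*κ*((n:ℝ)-1) + 2*(m:ℝ))+1) :=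
          Real.rpow_le_rpow (by linarith) (by linarith) hE
        exact div_le_div₀ (Real.rpow_nonneg hx0pos.le _) (by linarith) hx0pos (by linarith)
      have hsplit : x i0 ^ ((a-2) + 2*κ*((n:ℝ)-1) + 2*(m:ℝ))
          = x i0^(a-2) * x i0^(2*κ*((n:ℝ)-1)) * x i0^(2*m) := by
        rw [Real.rpow_add hx0pos, Real.rpow_add hx0pos]
        congr 1
        rw [← Real.rpow_natCast (x i0) (2*m)]
        congr 1
        push_cast
        ring
      calc K / (2*((2:ℝ)^k*R)) = K * (1/(2*((2:ℝ)^k*R))) := by ring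
        _ ≤ K * x i0 ^ ((a-2) + 2*κ*((n:ℝ)-1) + 2*(m:ℝ)) :=
            mul_le_mul_of_nonneg_left hx0E hKpos.le
        _ = ((x i0 ^ (a-2) * K1)
              * ((x i0 ^ (2*κ*((n:ℝ)-1)) / (2:ℝ)^(2*κ*((n:ℝ)-1))) * c2)) * x i0 ^ (2*m) := by
            rw [hK, hK2, hsplit]
            ring
        _ ≤ WB n κ a x * (MvPolynomial.eval x f)^2 :=
            mul_le_mul hWBlow hA (pow_nonneg hx0pos.le _)
              (WB_nonneg n κ a x hxpos)
    -- lintegral contradiction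
    have hg : Measurable fun x : Fin n → ℝ => ((‖(MvPolynomial.eval x f)^2‖₊ : ℝ≥0) : ℝ≥0∞) :=
      (((MvPolynomial.continuous_eval f).measurable).pow_const 2).nnnorm.coe_nnreal_ennreal
    have hfin : (∫⁻ x in {x : Fin n → ℝ | ∀ i, 0 < x i},
        ENNReal.ofReal (WB n κ a x) * (‖(MvPolynomial.eval x f)^2‖₊ : ℝ≥0∞) ∂volume) < ⊤ := by
      have h2 : (∫⁻ x, (‖(MvPolynomial.eval x f)^2‖₊ : ℝ≥0∞) ∂(muB n κ a)) < ⊤ := hint.2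
      rw [muB, lintegral_withDensity_eq_lintegral_mul _ hwm hg] at h2
      exact h2
    set δ : ℝ≥0∞ := ENNReal.ofReal (K/2 * ((1:ℝ)/2)^(n-1)) with hδ
    have hδ0 : δ ≠ 0 := by
      rw [hδ]
      simp only [ne_eq, ENNReal.ofReal_eq_zero, not_le]
      positivity
    have hlow : ∀ k : ℕ, δ ≤ ∫⁻ x in B k,
        ENNReal.ofReal (WB n κ a x) * (‖(MvPolynomial.eval x f)^2‖₊ : ℝ≥0∞) ∂volume := by
      intro k
      have hc : ∀ x ∈ B k, ENNReal.ofReal (K / (2*((2:ℝ)^k*R)))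
          ≤ ENNReal.ofReal (WB n κ a x) * (‖(MvPolynomial.eval x f)^2‖₊ : ℝ≥0∞) := by
        intro x hx
        have hWB0 := WB_nonneg n κ a x (fun i => hBpos k x hx i)
        rw [← enorm_eq_nnnorm, Real.enorm_eq_ofReal (sq_nonneg _), ← ENNReal.ofReal_mul hWB0]
        exact ENNReal.ofReal_le_ofReal (key k x hx)
      calc δ = ENNReal.ofReal (K / (2*((2:ℝ)^k*R))) * volume (B k) := by
            rw [hvol k, hδ]
            rw [← ENNReal.ofReal_pow (by norm_num), ← ENNReal.ofReal_mul (by positivity)]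
            rw [← ENNReal.ofReal_mul (by positivity)]
            congr 1
            have ht0 : (0:ℝ) < (2:ℝ)^k*R := by positivity
            field_simp
        _ = ∫⁻ _ in B k, ENNReal.ofReal (K / (2*((2:ℝ)^k*R))) ∂volume :=
            (setLIntegral_const _ _).symm
        _ ≤ _ := setLIntegral_mono' (hBmeas k) hc
    have htop : (⊤:ℝ≥0∞) ≤ ∫⁻ x in {x : Fin n → ℝ | ∀ i, 0 < x i},
        ENNReal.ofReal (WB n κ a x) * (‖(MvPolynomial.eval x f)^2‖₊ : ℝ≥0∞) ∂volume := by
      calc (⊤:ℝ≥0∞) = ∑' _ : ℕ, δ := (ENNReal.tsum_const_eq_top_of_ne_zero hδ0).symm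
        _ ≤ ∑' k : ℕ, ∫⁻ x in B k,
            ENNReal.ofReal (WB n κ a x) * (‖(MvPolynomial.eval x f)^2‖₊ : ℝ≥0∞) ∂volume :=
            ENNReal.tsum_le_tsum hlow
        _ = ∫⁻ x in ⋃ k, B k,
            ENNReal.ofReal (WB n κ a x) * (‖(MvPolynomial.eval x f)^2‖₊ : ℝ≥0∞) ∂volume :=
            (lintegral_iUnion hBmeas hdisj _).symm
        _ ≤ _ := lintegral_mono_set (Set.iUnion_subset hBS)
    exact absurd (lt_of_le_of_lt htop hfin) (lt_irrefl ⊤)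
  · intro ha f hsym hdeg
    have hcond : (a - 2) + ((2*m : ℕ):ℝ) + 2*κ*((n:ℝ)-1) < -1 := by
      push_cast
      nlinarith [ha]
    unfold muB
    rw [integrable_withDensity_iff hwm
      (Filter.Eventually.of_forall fun x => ENNReal.ofReal_lt_top)]
    have hCf0 : (0:ℝ) ≤ ∑ d ∈ f.support, |f.coeff d| :=
      Finset.sum_nonneg fun d _ => abs_nonneg _
    have hψint : Integrable ((Set.Ioi (0:ℝ)).indicator (phi (2*m) (2*κ*((n:ℝ)-1)) (a-2)))
        volume := by
      rw [integrable_indicator_iff measurableSet_Ioi]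
      exact phi_integrable (2*m) _ _ hq0 hcond
    have hΨint : Integrable (fun x : Fin n → ℝ => (∑ d ∈ f.support, |f.coeff d|)^2 *
        ∏ i, (Set.Ioi (0:ℝ)).indicator (phi (2*m) (2*κ*((n:ℝ)-1)) (a-2)) (x i)) volume :=
      (Integrable.fintype_prod (𝕜 := ℝ)
        (f := fun _ : Fin n => (Set.Ioi (0:ℝ)).indicator (phi (2*m) (2*κ*((n:ℝ)-1)) (a-2)))
        fun i => hψint).const_mul _
    apply Integrable.mono' (hΨint.restrict (s := {x : Fin n → ℝ | ∀ i, 0 < x i}))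
    · exact ((((MvPolynomial.continuous_eval f).measurable).pow_const 2).mul
        hwm.ennreal_toReal).aestronglyMeasurable
    · rw [ae_restrict_iff' hSm]
      apply Filter.Eventually.of_forall
      intro x hx
      simp only [Set.mem_setOf_eq] at hx
      have hWB0 := WB_nonneg n κ a x hx
      rw [ENNReal.toReal_ofReal hWB0]
      have hnorm : ‖(MvPolynomial.eval x f) ^ 2 * WB n κ a x‖
          = (MvPolynomial.eval x f) ^2 * WB n κ a x := by
        rw [Real.norm_eq_abs, abs_of_nonneg (mul_nonneg (sq_nonneg _) hWB0)]
      rw [hnorm]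
      have hψx : ∀ i, (Set.Ioi (0:ℝ)).indicator (phi (2*m) (2*κ*((n:ℝ)-1)) (a-2)) (x i)
          = phi (2*m) (2*κ*((n:ℝ)-1)) (a-2) (x i) :=
        fun i => Set.indicator_of_mem (hx i) _
      have hevalb : (MvPolynomial.eval x f)^2
          ≤ (∑ d ∈ f.support, |f.coeff d|)^2 * ∏ i, (1 + x i)^(2*m) := by
        have h1 := poly_bound n m f hdeg x
        have h2 : ∀ i, |x i| = x i := fun i => abs_of_pos (hx i)
        simp_rw [h2] at h1
        rw [← sq_abs]
        calc |MvPolynomial.eval x f|^2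
            ≤ ((∑ d ∈ f.support, |f.coeff d|) * ∏ i, (1+x i)^m)^2 :=
              pow_le_pow_left₀ (abs_nonneg _) h1 2
          _ = (∑ d ∈ f.support, |f.coeff d|)^2 * ∏ i, (1+x i)^(2*m) := by
              rw [mul_pow, ← Finset.prod_pow]
              congr 1
              exact Finset.prod_congr rfl fun i _ => by rw [← pow_mul, mul_comm m 2]
      have hP0 : (0:ℝ) ≤ ∏ i, ((x i)^(a-2) * Real.exp (-2 / x i)) :=
        Finset.prod_nonneg fun i _ =>
          mul_nonneg (Real.rpow_nonneg (hx i).le _) (Real.exp_nonneg _)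
      have hWBb : WB n κ a x ≤ (∏ i, ((x i)^(a-2) * Real.exp (-2 / x i)))
          * ∏ i, (1 + x i)^(2*κ*((n:ℝ)-1)) := by
        unfold WB
        exact mul_le_mul_of_nonneg_left (pair_bound n hn κ hκ x hx) hP0
      calc (MvPolynomial.eval x f)^2 * WB n κ a x
          ≤ ((∑ d ∈ f.support, |f.coeff d|)^2 * ∏ i, (1 + x i)^(2*m))
            * ((∏ i, ((x i)^(a-2) * Real.exp (-2 / x i)))
              * ∏ i, (1 + x i)^(2*κ*((n:ℝ)-1))) := by
            apply mul_le_mul hevalb hWBb hWB0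
            apply mul_nonneg (sq_nonneg _)
            exact Finset.prod_nonneg fun i _ => pow_nonneg (by linarith [hx i]) _
        _ = (∑ d ∈ f.support, |f.coeff d|)^2
            * ∏ i, (Set.Ioi (0:ℝ)).indicator (phi (2*m) (2*κ*((n:ℝ)-1)) (a-2)) (x i) := by
            simp_rw [hψx]
            unfold phi
            have he : ∀ i : Fin n, Real.exp (-(2 / x i)) = Real.exp (-2 / x i) := by
              intro i; rw [neg_div]
            simp_rw [he]
            simp only [Finset.prod_mul_distrib]
            ring

end MVB
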